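/- Let q = p^α, where p is an odd prime and α ≥ 1 is an integer, and let A, B, C, D, E be complex-valued Dirichlet characters mod q. Then ₃F₂(A,B,C;D,E|1) = (A·B·C·D·E)(−1) · ₃F₂(A, A·D̄, A·Ē; A·B̄, A·C̄ | 1). -/

import Mathlib

open Finset

/-- The complex-conjugate Dirichlet character. -/
noncomputable def conjChar {q : ℕ} (A : DirichletCharacter ℂ q) : DirichletCharacter ℂ q :=
  A.ringHomComp (starRingEnd ℂ)

/-- The binomial coefficient `binom(A,B) = B(-1)/q * J(A, B̄)` for Dirichlet characters. -/
noncomputable def dBinom {q : ℕ} [NeZero q] (A B : DirichletCharacter ℂ q) : ℂ :=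
  B (-1) / q * jacobiSum A (conjChar B)

/-- The hypergeometric function `₃F₂` for Dirichlet characters. -/
noncomputable def threeF₂ {q : ℕ} [NeZero q] (A B C D E : DirichletCharacter ℂ q)
    (x : ZMod q) : ℂ :=
  (q / (Nat.totient q : ℂ)) *
    ∑ᶠ χ : DirichletCharacter ℂ q,
      dBinom (A * χ) χ * dBinom (B * χ) (D * χ) * dBinom (C * χ) (E * χ) * χ x

lemma conjChar_apply {q : ℕ} (A : DirichletCharacter ℂ q) (x : ZMod q) :
    conjChar A x = (starRingEnd ℂ) (A x) := rfl

lemma conjChar_conjChar {q : ℕ} (A : DirichletCharacter ℂ q) : conjChar (conjChar A) = A :=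
  MulChar.ext' fun a => by simp [conjChar_apply]

lemma conjChar_mul {q : ℕ} (A B : DirichletCharacter ℂ q) :
    conjChar (A * B) = conjChar A * conjChar B :=
  MulChar.ringHomComp_mul A B _

lemma sq_neg_one {q : ℕ} (A : DirichletCharacter ℂ q) : A (-1) * A (-1) = 1 := by
  rw [← map_mul, neg_mul_neg, one_mul, map_one]

lemma conjChar_neg_one {q : ℕ} (A : DirichletCharacter ℂ q) : conjChar A (-1) = A (-1) := by
  rcases mul_self_eq_one_iff.mp (sq_neg_one A) with h | h <;> simp [conjChar_apply, h]

lemma mul_conjChar {q : ℕ} [NeZero q] (A : DirichletCharacter ℂ q) : A * conjChar A = 1 := by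
  apply MulChar.ext
  intro a
  rw [MulChar.one_apply_coe]
  have hz : (A a) ^ (Fintype.card (ZMod q)ˣ) = 1 := by
    rw [← MulChar.pow_apply_coe, MulChar.pow_card_eq_one, MulChar.one_apply_coe]
  have hnorm : ‖(A (a : ZMod q))‖ = 1 :=
    Complex.norm_eq_one_of_pow_eq_one hz Fintype.card_ne_zero
  have : (A * conjChar A) (a : ZMod q) = A (a:ZMod q) * (starRingEnd ℂ) (A (a:ZMod q)) := by
    simp [conjChar_apply]
  rw [this, Complex.mul_conj, Complex.normSq_eq_norm_sq, hnorm]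
  norm_num

lemma dBinom_swap {q : ℕ} [NeZero q] (X Y : DirichletCharacter ℂ q) :
    dBinom X Y = X (-1) * Y (-1) * dBinom (conjChar Y) (conjChar X) := by
  unfold dBinom
  rw [conjChar_conjChar, conjChar_neg_one, jacobiSum_comm X (conjChar Y)]
  rcases mul_self_eq_one_iff.mp (sq_neg_one X) with h1 | h1 <;> rw [h1] <;> ring

theorem threeF₂_transform₂ (p α : ℕ) (hp : p.Prime) (hodd : Odd p) (hα : 1 ≤ α)
    (q : ℕ) (hq : q = p ^ α) [NeZero q] (A B C D E : DirichletCharacter ℂ q) :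
    threeF₂ A B C D E 1 =
      (A * B * C * D * E) (-1) *
        threeF₂ A (A * conjChar D) (A * conjChar E) (A * conjChar B) (A * conjChar C) 1 := by
  have hbij : Function.Bijective (fun χ : DirichletCharacter ℂ q => conjChar (A * χ)) := by
    apply Function.Involutive.bijective
    intro χ
    simp only
    rw [show A * conjChar (A * χ) = conjChar χ from by
          rw [conjChar_mul, ← mul_assoc, mul_conjChar, one_mul],
        conjChar_conjChar]
  set ε := A (-1) * B (-1) * C (-1) * D (-1) * E (-1) with hε
  have hAA := sq_neg_one A
  have hBB := sq_neg_one B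
  have hCC := sq_neg_one C
  have hDD := sq_neg_one D
  have hEE := sq_neg_one E
  have hε2 : ε * ε = 1 := by
    rw [hε]
    have : A (-1) * B (-1) * C (-1) * D (-1) * E (-1) *
        (A (-1) * B (-1) * C (-1) * D (-1) * E (-1)) =
        (A (-1) * A (-1)) * ((B (-1) * B (-1)) * ((C (-1) * C (-1)) *
          ((D (-1) * D (-1)) * (E (-1) * E (-1))))) := by ring
    rw [this, hAA, hBB, hCC, hDD, hEE]
    norm_num
  have key : ∀ χ : DirichletCharacter ℂ q,
      dBinom (A * conjChar (A * χ)) (conjChar (A * χ)) *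
        dBinom (A * conjChar D * conjChar (A * χ)) (A * conjChar B * conjChar (A * χ)) *
        dBinom (A * conjChar E * conjChar (A * χ)) (A * conjChar C * conjChar (A * χ)) =
      ε * (dBinom (A * χ) χ * dBinom (B * χ) (D * χ) * dBinom (C * χ) (E * χ)) := by
    intro χ
    have h1 : A * conjChar (A * χ) = conjChar χ := by
      rw [conjChar_mul, ← mul_assoc, mul_conjChar, one_mul]
    have h2 : A * conjChar D * conjChar (A * χ) = conjChar (D * χ) := by
      rw [conjChar_mul A χ, conjChar_mul D χ, mul_mul_mul_comm, mul_conjChar, one_mul]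
    have h3 : A * conjChar B * conjChar (A * χ) = conjChar (B * χ) := by
      rw [conjChar_mul A χ, conjChar_mul B χ, mul_mul_mul_comm, mul_conjChar, one_mul]
    have h4 : A * conjChar E * conjChar (A * χ) = conjChar (E * χ) := by
      rw [conjChar_mul A χ, conjChar_mul E χ, mul_mul_mul_comm, mul_conjChar, one_mul]
    have h5 : A * conjChar C * conjChar (A * χ) = conjChar (C * χ) := by
      rw [conjChar_mul A χ, conjChar_mul C χ, mul_mul_mul_comm, mul_conjChar, one_mul]
    rw [h1, h2, h3, h4, h5,
        dBinom_swap (conjChar χ) (conjChar (A * χ)),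
        dBinom_swap (conjChar (D * χ)) (conjChar (B * χ)),
        dBinom_swap (conjChar (E * χ)) (conjChar (C * χ))]
    simp only [conjChar_conjChar, conjChar_neg_one, MulChar.coeToFun_mul, Pi.mul_apply, hε]
    rcases mul_self_eq_one_iff.mp (sq_neg_one χ) with h | h <;> rw [h] <;> ring
  unfold threeF₂
  simp only [map_one, mul_one]
  have hABCDE : (A * B * C * D * E) (-1) = ε := by
    simp only [MulChar.coeToFun_mul, Pi.mul_apply, hε]
  have hsum : (∑ᶠ ψ : DirichletCharacter ℂ q,
        dBinom (A * ψ) ψ * dBinom (A * conjChar D * ψ) (A * conjChar B * ψ) *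
          dBinom (A * conjChar E * ψ) (A * conjChar C * ψ)) =
      ε * ∑ᶠ χ : DirichletCharacter ℂ q,
        dBinom (A * χ) χ * dBinom (B * χ) (D * χ) * dBinom (C * χ) (E * χ) := by
    rw [← finsum_comp (fun χ : DirichletCharacter ℂ q => conjChar (A * χ)) hbij,
        mul_finsum _ _]
    exact finsum_congr key
  rw [hABCDE, hsum]
  set s := ∑ᶠ χ : DirichletCharacter ℂ q,
      dBinom (A * χ) χ * dBinom (B * χ) (D * χ) * dBinom (C * χ) (E * χ) with hs
  set K : ℂ := (q : ℂ) / (Nat.totient q : ℂ) with hK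
  linear_combination (-(K * s)) * hε2
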